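/- Let N be an exact category, let bBN ⊇ qBN be the subcategory of weak equivalences of BN consisting of maps f such that ⊥f is a quasi-isomorphism, and let B^bN be the corresponding subcategory of b-acyclic binary complexes, with quasi-isomorphisms as weak equivalences. Then the map KqB^bN → K[qBN →⊥ qCN] induced by the identity on KqBN (via the comparison of the Waldhausen fibration sequence KqB^bN → KqBN → KbBN with the homotopy fiber sequence of ⊥ : KqBN → KqCN, using that ⊥ : KbBN → KqCN is a homotopy equivalence) is a homotopy equivalence. -/

import Mathlib

open ContinuousMap

noncomputable section

/-- The homotopy fiber of a continuous map `f : X → Y` over a base point `y₀ : Y`: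
the space of pairs `(x, α)` where `α : [0,1] → Y` is a path with `α 0 = y₀` and `α 1 = f x`. -/
def HoFib {X Y : Type} [TopologicalSpace X] [TopologicalSpace Y]
    (f : C(X, Y)) (y₀ : Y) : Type :=
  { p : X × C(unitInterval, Y) // p.2 0 = y₀ ∧ p.2 1 = f p.1 }

instance HoFib.topologicalSpace {X Y : Type} [TopologicalSpace X] [TopologicalSpace Y]
    (f : C(X, Y)) (y₀ : Y) : TopologicalSpace (HoFib f y₀) :=
  inferInstanceAs (TopologicalSpace { p : X × C(unitInterval, Y) // p.2 0 = y₀ ∧ p.2 1 = f p.1 })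

/-- A continuous map is a homotopy equivalence. -/
def IsHomotopyEquiv {X Y : Type} [TopologicalSpace X] [TopologicalSpace Y] (f : C(X, Y)) : Prop :=
  ∃ g : C(Y, X), (g.comp f).Homotopic (ContinuousMap.id X) ∧
    (f.comp g).Homotopic (ContinuousMap.id Y)

/-- The map between homotopy fibers induced by a strictly commuting square. -/
def HoFib.map {X Y X' Y' : Type} [TopologicalSpace X] [TopologicalSpace Y]
    [TopologicalSpace X'] [TopologicalSpace Y']
    {f : C(X, Y)} {f' : C(X', Y')} {y₀ : Y} {y₀' : Y'}
    (g : C(X, X')) (h : C(Y, Y'))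
    (hcomm : ∀ x, h (f x) = f' (g x)) (hbase : h y₀ = y₀') :
    C(HoFib f y₀, HoFib f' y₀') where
  toFun p := ⟨(g p.1.1, h.comp p.1.2), by
    refine ⟨?_, ?_⟩
    · show h (p.1.2 0) = y₀'
      rw [p.2.1, hbase]
    · show h (p.1.2 1) = f' (g p.1.1)
      rw [p.2.2, hcomm]⟩
  continuous_toFun := by
    refine Continuous.subtype_mk ?_ _
    refine Continuous.prodMk ?_ ?_
    · exact g.continuous.comp (continuous_fst.comp continuous_subtype_val)
    · exact (ContinuousMap.continuous_postcomp h).comp (continuous_snd.comp continuous_subtype_val)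

/-- The canonical map from `A` to the homotopy fiber of `g : B → C`, for a composable pair
`f : A → B`, `g : B → C` whose composite is constant at `c₀` (using the constant path). -/
def toHoFib {A B C' : Type} [TopologicalSpace A] [TopologicalSpace B] [TopologicalSpace C']
    (f : C(A, B)) (g : C(B, C')) (c₀ : C') (hnull : ∀ a, g (f a) = c₀) :
    C(A, HoFib g c₀) where
  toFun a := ⟨(f a, ContinuousMap.const _ c₀), ⟨rfl, (hnull a).symm⟩⟩
  continuous_toFun := by
    refine Continuous.subtype_mk ?_ _
    exact f.continuous.prodMk continuous_const

/-- `A → B → C` is a homotopy fiber sequence: the canonical map from `A` to the homotopy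
fiber of `B → C` is a homotopy equivalence. -/
def IsHoFiberSeq {A B C' : Type} [TopologicalSpace A] [TopologicalSpace B] [TopologicalSpace C']
    (f : C(A, B)) (g : C(B, C')) (c₀ : C') (hnull : ∀ a, g (f a) = c₀) : Prop :=
  IsHomotopyEquiv (toHoFib f g c₀ hnull)

/-- The class of a point in `π₀`. -/
def Pi0.mk {X : Type} [TopologicalSpace X] (x : X) : ZerothHomotopy X :=
  Quotient.mk (pathSetoid X) x

/-- The map on `π₀` induced by a continuous map. -/
def Pi0Map {X Y : Type} [TopologicalSpace X] [TopologicalSpace Y] (f : C(X, Y)) :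
    ZerothHomotopy X → ZerothHomotopy Y :=
  Quotient.map f (fun _ _ h => Nonempty.map (fun p => p.map f.continuous) h)

end

section FiberAux

open ContinuousMap

variable {X Y Z : Type} [TopologicalSpace X] [TopologicalSpace Y] [TopologicalSpace Z]

/-- Clamp a real number into the unit interval. -/
noncomputable def pI (r : ℝ) : unitInterval := Set.projIcc 0 1 zero_le_one r

lemma coe_pI (r : ℝ) : (pI r : ℝ) = max 0 (min 1 r) := rfl

lemma continuous_pI : Continuous pI := by unfold pI; exact continuous_projIcc

lemma pI_of_nonpos {r : ℝ} (h : r ≤ 0) : pI r = 0 :=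
  Subtype.ext (by
    show max 0 (min 1 r) = 0
    rw [min_eq_right (h.trans zero_le_one), max_eq_left h])

lemma pI_of_one_le {r : ℝ} (h : 1 ≤ r) : pI r = 1 :=
  Subtype.ext (by
    show max 0 (min 1 r) = 1
    rw [min_eq_left h, max_eq_right zero_le_one])

lemma pI_coe (t : unitInterval) : pI (t : ℝ) = t :=
  Subtype.ext (by
    show max 0 (min 1 (t:ℝ)) = (t:ℝ)
    rw [min_eq_right t.2.2, max_eq_right t.2.1])

lemma coe_pI_of_mem {r : ℝ} (h0 : 0 ≤ r) (h1 : r ≤ 1) : ((pI r : unitInterval) : ℝ) = r := by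
  rw [coe_pI, min_eq_right h1, max_eq_right h0]

lemma pI_zero : pI 0 = 0 := pI_of_nonpos le_rfl

lemma pI_one : pI 1 = 1 := pI_of_one_le le_rfl

lemma cont_x {f : C(X,Y)} {y₀ : Y} :
    Continuous fun z : HoFib f y₀ => z.1.1 :=
  continuous_fst.comp continuous_subtype_val

lemma cont_path {f : C(X,Y)} {y₀ : Y} :
    Continuous fun z : HoFib f y₀ => z.1.2 :=
  continuous_snd.comp continuous_subtype_val

lemma cont_pathEval {f : C(X,Y)} {y₀ : Y} {W : Type} [TopologicalSpace W]
    {g : W → HoFib f y₀} (hg : Continuous g) {u : W → ℝ} (hu : Continuous u) :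
    Continuous fun w => ((g w).1.2 : C(unitInterval, Y)) (pI (u w)) :=
  ContinuousEval.continuous_eval.comp ((cont_path.comp hg).prodMk (continuous_pI.comp hu))

/-- Builder for continuous maps into a homotopy fiber. -/
noncomputable def mkMap (f : C(X,Y)) (y₀ : Y) (x : Z → X) (hx : Continuous x)
    (P : Z × unitInterval → Y) (hP : Continuous P)
    (h0 : ∀ z, P (z, 0) = y₀) (h1 : ∀ z, P (z, 1) = f (x z)) :
    C(Z, HoFib f y₀) where
  toFun z := ⟨(x z, (ContinuousMap.mk P hP).curry z), h0 z, h1 z⟩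
  continuous_toFun := by
    refine Continuous.subtype_mk ?_ _
    exact hx.prodMk (ContinuousMap.mk P hP).curry.continuous

@[simp] lemma mkMap_fst (f : C(X,Y)) (y₀ : Y) (x : Z → X) (hx : Continuous x)
    (P : Z × unitInterval → Y) (hP : Continuous P) (h0 h1) (z : Z) :
    ((mkMap f y₀ x hx P hP h0 h1) z).1.1 = x z := rfl

@[simp] lemma mkMap_snd (f : C(X,Y)) (y₀ : Y) (x : Z → X) (hx : Continuous x)
    (P : Z × unitInterval → Y) (hP : Continuous P) (h0 h1) (z : Z) (t : unitInterval) :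
    ((mkMap f y₀ x hx P hP h0 h1) z).1.2 t = P (z, t) := rfl

/-- Builder for homotopies between maps into a homotopy fiber. -/
lemma homotopic_of {f : C(X,Y)} {y₀ : Y} (φ ψ : C(Z, HoFib f y₀))
    (x : Z → X) (hx : Continuous x)
    (Q : (unitInterval × Z) × unitInterval → Y) (hQ : Continuous Q)
    (h0 : ∀ s z, Q ((s, z), 0) = y₀) (h1 : ∀ s z, Q ((s, z), 1) = f (x z))
    (hφ1 : ∀ z, (φ z).1.1 = x z) (hφ2 : ∀ z t, (φ z).1.2 t = Q ((0, z), t))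
    (hψ1 : ∀ z, (ψ z).1.1 = x z) (hψ2 : ∀ z t, (ψ z).1.2 t = Q ((1, z), t)) :
    φ.Homotopic ψ := by
  refine ⟨{ toContinuousMap := ⟨fun p => ⟨(x p.2, (ContinuousMap.mk Q hQ).curry p),
      h0 p.1 p.2, h1 p.1 p.2⟩, ?_⟩, map_zero_left := ?_, map_one_left := ?_ }⟩
  · refine Continuous.subtype_mk ?_ _
    exact (hx.comp continuous_snd).prodMk (ContinuousMap.mk Q hQ).curry.continuous
  · intro z
    exact Subtype.ext (Prod.ext (hφ1 z).symm
      (ContinuousMap.ext fun t => (hφ2 z t).symm))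
  · intro z
    exact Subtype.ext (Prod.ext (hψ1 z).symm
      (ContinuousMap.ext fun t => (hψ2 z t).symm))

/-- Straight-line reparametrization homotopies. -/
lemma reparam_homotopic {f : C(X,Y)} {y₀ : Y} (φ ψ : C(Z, HoFib f y₀))
    (x : Z → X) (hx : Continuous x)
    (V : Z × unitInterval → Y) (hV : Continuous V)
    (hV0 : ∀ z, V (z, 0) = y₀) (hV1 : ∀ z, V (z, 1) = f (x z))
    (a b : ℝ → ℝ) (ha : Continuous a) (hb : Continuous b)
    (ha0 : a 0 ≤ 0) (hb0 : b 0 ≤ 0) (ha1 : 1 ≤ a 1) (hb1 : 1 ≤ b 1)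
    (hφ1 : ∀ z, (φ z).1.1 = x z) (hφ2 : ∀ z t, (φ z).1.2 t = V (z, pI (a (t:ℝ))))
    (hψ1 : ∀ z, (ψ z).1.1 = x z) (hψ2 : ∀ z t, (ψ z).1.2 t = V (z, pI (b (t:ℝ)))) :
    φ.Homotopic ψ := by
  refine homotopic_of φ ψ x hx
    (fun p => V (p.1.2, pI ((1 - (p.1.1 : ℝ)) * a (p.2 : ℝ) + (p.1.1 : ℝ) * b (p.2 : ℝ))))
    ?_ ?_ ?_ hφ1 ?_ hψ1 ?_
  · refine hV.comp (Continuous.prodMk (continuous_snd.comp continuous_fst) ?_)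
    refine continuous_pI.comp ?_
    have hs : Continuous fun p : (unitInterval × Z) × unitInterval => (p.1.1 : ℝ) :=
      continuous_subtype_val.comp (continuous_fst.comp continuous_fst)
    have ht : Continuous fun p : (unitInterval × Z) × unitInterval => (p.2 : ℝ) :=
      continuous_subtype_val.comp continuous_snd
    exact ((continuous_const.sub hs).mul (ha.comp ht)).add (hs.mul (hb.comp ht))
  · intro s z
    have hc : ((0 : unitInterval) : ℝ) = 0 := Set.Icc.coe_zero
    have hle : (1 - (s : ℝ)) * a 0 + (s : ℝ) * b 0 ≤ 0 := by
      have h1 : (1 - (s : ℝ)) * a 0 ≤ 0 :=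
        mul_nonpos_of_nonneg_of_nonpos (by linarith [s.2.2]) ha0
      have h2 : (s : ℝ) * b 0 ≤ 0 := mul_nonpos_of_nonneg_of_nonpos s.2.1 hb0
      linarith
    simp only [hc]
    rw [pI_of_nonpos hle, hV0]
  · intro s z
    have hc : ((1 : unitInterval) : ℝ) = 1 := Set.Icc.coe_one
    have hle : 1 ≤ (1 - (s : ℝ)) * a 1 + (s : ℝ) * b 1 := by
      nlinarith [s.2.1, s.2.2]
    simp only [hc]
    rw [pI_of_one_le hle, hV1]
  · intro z t
    rw [hφ2 z t]
    have hc : ((0 : unitInterval) : ℝ) = 0 := Set.Icc.coe_zero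
    simp only [hc]
    ring_nf
  · intro z t
    rw [hψ2 z t]
    have hc : ((1 : unitInterval) : ℝ) = 1 := Set.Icc.coe_one
    simp only [hc]
    ring_nf

end FiberAux

section Inv

open ContinuousMap

variable {X Y : Type} [TopologicalSpace X] [TopologicalSpace Y]

/-- Evaluation of the homotopy `M` at a clamped real time. -/
noncomputable def ME {m : C(Y,Y)} (M : m.Homotopy (ContinuousMap.id Y)) (r : ℝ) (y : Y) : Y :=
  M (pI r, y)

lemma ME_zero {m : C(Y,Y)} (M : m.Homotopy (ContinuousMap.id Y)) (y : Y) : ME M 0 y = m y := by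
  rw [ME, pI_zero, M.apply_zero]

lemma ME_one {m : C(Y,Y)} (M : m.Homotopy (ContinuousMap.id Y)) (y : Y) : ME M 1 y = y := by
  rw [ME, pI_one]
  exact M.apply_one y

lemma continuous_ME {m : C(Y,Y)} (M : m.Homotopy (ContinuousMap.id Y))
    {W : Type} [TopologicalSpace W] {u : W → ℝ} {v : W → Y}
    (hu : Continuous u) (hv : Continuous v) :
    Continuous fun w => ME M (u w) (v w) :=
  M.continuous.comp ((continuous_pI.comp hu).prodMk hv)

variable (f : C(X,Y)) (y₀ : Y) (m : C(Y,Y)) (M : m.Homotopy (ContinuousMap.id Y))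

/-- The underlying family of paths of the comparison map `E`. -/
noncomputable def eE (z : HoFib (m.comp f) (m y₀)) (r : ℝ) : Y :=
  if r ≤ 1/3 then ME M (1 - 3*r) y₀
  else if r ≤ 2/3 then z.1.2 (pI (3*r - 1))
  else ME M (3*r - 2) (f z.1.1)

lemma continuous_eE : Continuous fun p : HoFib (m.comp f) (m y₀) × ℝ =>
    eE f y₀ m M p.1 p.2 := by
  unfold eE
  apply Continuous.if_le
  · exact continuous_ME M (continuous_const.sub (continuous_const.mul continuous_snd))
      continuous_const
  · apply Continuous.if_le
    · exact cont_pathEval continuous_fst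
        ((continuous_const.mul continuous_snd).sub continuous_const)
    · exact continuous_ME M ((continuous_const.mul continuous_snd).sub continuous_const)
        (f.continuous.comp (cont_x.comp continuous_fst))
    · exact continuous_snd
    · exact continuous_const
    · intro p hp
      rw [hp]
      have h1 : pI (3 * (2/3 : ℝ) - 1) = 1 := by rw [pI_of_one_le (by norm_num)]
      rw [h1, p.1.2.2]
      have : (3 * (2/3 : ℝ) - 2) = 0 := by norm_num
      rw [this, ME_zero]
      rfl
  · exact continuous_snd
  · exact continuous_const
  · intro p hp
    rw [hp, if_pos (by norm_num : (1/3 : ℝ) ≤ 2/3)]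
    have h1 : pI (3 * (1/3 : ℝ) - 1) = 0 := by rw [show 3 * (1/3:ℝ) - 1 = 0 by norm_num, pI_zero]
    rw [h1, p.1.2.1]
    have : (1 - 3 * (1/3 : ℝ)) = 0 := by norm_num
    rw [this, ME_zero]

lemma eE_zero (z : HoFib (m.comp f) (m y₀)) : eE f y₀ m M z 0 = y₀ := by
  rw [eE, if_pos (by norm_num : (0:ℝ) ≤ 1/3)]
  rw [show (1 - 3*(0:ℝ)) = 1 by norm_num, ME_one]

lemma eE_one (z : HoFib (m.comp f) (m y₀)) : eE f y₀ m M z 1 = f z.1.1 := by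
  rw [eE, if_neg (by norm_num), if_neg (by norm_num)]
  rw [show (3*(1:ℝ) - 2) = 1 by norm_num, ME_one]

/-- The comparison map `E` from the homotopy fiber of `m ∘ f` to that of `f`. -/
noncomputable def Emap : C(HoFib (m.comp f) (m y₀), HoFib f y₀) :=
  mkMap f y₀ (fun z => z.1.1) cont_x
    (fun p => eE f y₀ m M p.1 (p.2 : ℝ))
    ((continuous_eE f y₀ m M).comp
      (continuous_fst.prodMk (continuous_subtype_val.comp continuous_snd)))
    (fun z => by
      show eE f y₀ m M z ((0 : unitInterval) : ℝ) = y₀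
      rw [Set.Icc.coe_zero]; exact eE_zero f y₀ m M z)
    (fun z => by
      show eE f y₀ m M z ((1 : unitInterval) : ℝ) = f z.1.1
      rw [Set.Icc.coe_one]; exact eE_one f y₀ m M z)

/-- The map on homotopy fibers induced by `m` over the identity. -/
noncomputable def Amap : C(HoFib f y₀, HoFib (m.comp f) (m y₀)) :=
  HoFib.map (ContinuousMap.id X) m (fun _ => rfl) rfl

lemma Amap_fst (z : HoFib f y₀) : ((Amap f y₀ m) z).1.1 = z.1.1 := rfl
lemma Amap_snd (z : HoFib f y₀) (t : unitInterval) :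
    ((Amap f y₀ m) z).1.2 t = m (z.1.2 t) := rfl

end Inv

section Htpy

open ContinuousMap

variable {X Y : Type} [TopologicalSpace X] [TopologicalSpace Y]
variable (f : C(X,Y)) (y₀ : Y) (m : C(Y,Y)) (M : m.Homotopy (ContinuousMap.id Y))

lemma eE_of_le (z) {r : ℝ} (h : r ≤ 1/3) :
    eE f y₀ m M z r = ME M (1 - 3*r) y₀ := by rw [eE, if_pos h]

lemma eE_of_mid (z) {r : ℝ} (h1 : ¬ r ≤ 1/3) (h2 : r ≤ 2/3) :
    eE f y₀ m M z r = z.1.2 (pI (3*r - 1)) := by rw [eE, if_neg h1, if_pos h2]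

lemma eE_of_gt (z) {r : ℝ} (h1 : ¬ r ≤ 1/3) (h2 : ¬ r ≤ 2/3) :
    eE f y₀ m M z r = ME M (3*r - 2) (f z.1.1) := by rw [eE, if_neg h1, if_neg h2]

/-- The reparametrized identity `R` on the homotopy fiber of `f`. -/
noncomputable def Rmap : C(HoFib f y₀, HoFib f y₀) :=
  mkMap f y₀ (fun z => z.1.1) cont_x
    (fun p => p.1.1.2 (pI (3*(p.2:ℝ) - 1)))
    (cont_pathEval continuous_fst
      ((continuous_const.mul (continuous_subtype_val.comp continuous_snd)).sub
        continuous_const))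
    (fun z => by
      show z.1.2 (pI (3*(((0:unitInterval)):ℝ) - 1)) = y₀
      rw [show (3*(((0:unitInterval)):ℝ) - 1) = -1 by rw [Set.Icc.coe_zero]; norm_num]
      rw [pI_of_nonpos (by norm_num), z.2.1])
    (fun z => by
      show z.1.2 (pI (3*(((1:unitInterval)):ℝ) - 1)) = f z.1.1
      rw [show (3*(((1:unitInterval)):ℝ) - 1) = 2 by rw [Set.Icc.coe_one]; norm_num]
      rw [pI_of_one_le (by norm_num), z.2.2])

lemma part_i : ((Emap f y₀ m M).comp (Amap f y₀ m)).Homotopic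
    (ContinuousMap.id (HoFib f y₀)) := by
  have hs : Continuous fun p : (unitInterval × HoFib f y₀) × unitInterval => ((p.1.1 : ℝ)) :=
    continuous_subtype_val.comp (continuous_fst.comp continuous_fst)
  have ht : Continuous fun p : (unitInterval × HoFib f y₀) × unitInterval => ((p.2 : ℝ)) :=
    continuous_subtype_val.comp continuous_snd
  have hz : Continuous fun p : (unitInterval × HoFib f y₀) × unitInterval => p.1.2 :=
    continuous_snd.comp continuous_fst
  have step1 : ((Emap f y₀ m M).comp (Amap f y₀ m)).Homotopic (Rmap f y₀) := by
    refine homotopic_of _ _ (fun z => z.1.1) cont_x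
      (fun p => if ((p.2:ℝ)) ≤ 1/3 then ME M (1 - 3*(p.2:ℝ)*(1-(p.1.1:ℝ))) y₀
        else if ((p.2:ℝ)) ≤ 2/3 then ME M ((p.1.1:ℝ)) (p.1.2.1.2 (pI (3*(p.2:ℝ) - 1)))
        else ME M ((p.1.1:ℝ) + (3*(p.2:ℝ) - 2)*(1-(p.1.1:ℝ))) (f p.1.2.1.1))
      ?_ ?_ ?_ ?_ ?_ ?_ ?_
    · apply Continuous.if_le
      · exact continuous_ME M
          (continuous_const.sub ((continuous_const.mul ht).mul (continuous_const.sub hs)))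
          continuous_const
      · apply Continuous.if_le
        · exact continuous_ME M hs (cont_pathEval hz
            ((continuous_const.mul ht).sub continuous_const))
        · exact continuous_ME M
            (hs.add (((continuous_const.mul ht).sub continuous_const).mul
              (continuous_const.sub hs)))
            (f.continuous.comp (cont_x.comp hz))
        · exact ht
        · exact continuous_const
        · intro p hp
          rw [hp]
          rw [show (3*(2/3:ℝ) - 1) = 1 by norm_num, pI_one, p.1.2.2.2]
          congr 1
          ring
      · exact ht
      · exact continuous_const
      · intro p hp
        rw [hp, if_pos (by norm_num : (1/3:ℝ) ≤ 2/3)]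
        rw [show (3*(1/3:ℝ) - 1) = 0 by norm_num, pI_zero, p.1.2.2.1]
        congr 1
        ring
    · intro s z
      simp only [Set.Icc.coe_zero]
      rw [if_pos (by norm_num : (0:ℝ) ≤ 1/3)]
      rw [show (1 - 3*(0:ℝ)*(1-(s:ℝ))) = 1 by ring, ME_one]
    · intro s z
      simp only [Set.Icc.coe_one]
      rw [if_neg (by norm_num : ¬ (1:ℝ) ≤ 1/3), if_neg (by norm_num : ¬ (1:ℝ) ≤ 2/3)]
      rw [show ((s:ℝ) + (3*(1:ℝ) - 2)*(1-(s:ℝ))) = 1 by ring, ME_one]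
    · intro z; rfl
    · intro z t
      show eE f y₀ m M ((Amap f y₀ m) z) (t:ℝ) = _
      simp only [Set.Icc.coe_zero]
      rcases le_or_gt ((t:ℝ)) (1/3) with h1 | h1
      · rw [eE_of_le _ _ _ _ _ h1, if_pos h1]
        congr 1
        ring
      · rcases le_or_gt ((t:ℝ)) (2/3) with h2 | h2
        · rw [eE_of_mid _ _ _ _ _ (not_le.mpr h1) h2, if_neg (not_le.mpr h1), if_pos h2]
          rw [ME_zero]
          rfl
        · rw [eE_of_gt _ _ _ _ _ (not_le.mpr h1) (not_le.mpr h2),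
            if_neg (not_le.mpr h1), if_neg (not_le.mpr h2)]
          show ME M _ (f z.1.1) = _
          congr 1
          ring
    · intro z; rfl
    · intro z t
      show z.1.2 (pI (3*(t:ℝ) - 1)) = _
      simp only [Set.Icc.coe_one]
      rcases le_or_gt ((t:ℝ)) (1/3) with h1 | h1
      · rw [if_pos h1]
        rw [pI_of_nonpos (by linarith), z.2.1]
        rw [show (1 - 3*(t:ℝ)*(1-(1:ℝ))) = 1 by ring, ME_one]
      · rcases le_or_gt ((t:ℝ)) (2/3) with h2 | h2
        · rw [if_neg (not_le.mpr h1), if_pos h2, ME_one]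
        · rw [if_neg (not_le.mpr h1), if_neg (not_le.mpr h2)]
          rw [pI_of_one_le (by linarith), z.2.2]
          rw [show ((1:ℝ) + (3*(t:ℝ) - 2)*(1-(1:ℝ))) = 1 by ring, ME_one]
  have step2 : (Rmap f y₀).Homotopic (ContinuousMap.id (HoFib f y₀)) := by
    refine reparam_homotopic _ _ (fun z => z.1.1) cont_x
      (fun p => p.1.1.2 p.2)
      (ContinuousEval.continuous_eval.comp ((cont_path.comp continuous_fst).prodMk
        continuous_snd))
      (fun z => z.2.1) (fun z => z.2.2)
      (fun r => 3*r - 1) (fun r => r)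
      (by continuity) continuous_id (by norm_num) le_rfl (by norm_num) le_rfl
      (fun z => rfl) (fun z t => rfl) (fun z => rfl) ?_
    intro z t
    show z.1.2 t = z.1.2 (pI (t:ℝ))
    rw [pI_coe]
  exact step1.trans step2

section Htpy2

open ContinuousMap

variable {X Y : Type} [TopologicalSpace X] [TopologicalSpace Y]
variable (f : C(X,Y)) (y₀ : Y) (m : C(Y,Y)) (M : m.Homotopy (ContinuousMap.id Y))

/-- `A ∘ E` with its path compressed into the middle third. -/
noncomputable def Wpad : C(HoFib (m.comp f) (m y₀), HoFib (m.comp f) (m y₀)) :=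
  mkMap (m.comp f) (m y₀) (fun z => z.1.1) cont_x
    (fun p => m (eE f y₀ m M p.1 ((pI (3*(p.2:ℝ) - 1) : unitInterval) : ℝ)))
    (m.continuous.comp ((continuous_eE f y₀ m M).comp (continuous_fst.prodMk
      (continuous_subtype_val.comp (continuous_pI.comp
        ((continuous_const.mul (continuous_subtype_val.comp continuous_snd)).sub
          continuous_const))))))
    (fun z => by
      show m (eE f y₀ m M z ((pI (3*(((0:unitInterval)):ℝ) - 1) : unitInterval) : ℝ)) = m y₀
      rw [show (3*(((0:unitInterval)):ℝ) - 1) = -1 by rw [Set.Icc.coe_zero]; norm_num]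
      rw [pI_of_nonpos (by norm_num), Set.Icc.coe_zero, eE_zero])
    (fun z => by
      show m (eE f y₀ m M z ((pI (3*(((1:unitInterval)):ℝ) - 1) : unitInterval) : ℝ))
        = (m.comp f) z.1.1
      rw [show (3*(((1:unitInterval)):ℝ) - 1) = 2 by rw [Set.Icc.coe_one]; norm_num]
      rw [pI_of_one_le (by norm_num), Set.Icc.coe_one, eE_one]
      rfl)

/-- The midpoint of the contraction: conjugation of the path by the homotopy `M`. -/
noncomputable def Z1map : C(HoFib (m.comp f) (m y₀), HoFib (m.comp f) (m y₀)) :=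
  mkMap (m.comp f) (m y₀) (fun z => z.1.1) cont_x
    (fun p => if ((p.2:ℝ)) ≤ 1/3 then ME M (3*(p.2:ℝ)) y₀
      else if ((p.2:ℝ)) ≤ 2/3 then eE f y₀ m M p.1 (3*(p.2:ℝ) - 1)
      else ME M (3 - 3*(p.2:ℝ)) (f p.1.1.1))
    (by
      have ht : Continuous fun p : HoFib (m.comp f) (m y₀) × unitInterval => ((p.2 : ℝ)) :=
        continuous_subtype_val.comp continuous_snd
      apply Continuous.if_le
      · exact continuous_ME M (continuous_const.mul ht) continuous_const
      · apply Continuous.if_le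
        · exact (continuous_eE f y₀ m M).comp (continuous_fst.prodMk
            ((continuous_const.mul ht).sub continuous_const))
        · exact continuous_ME M (continuous_const.sub (continuous_const.mul ht))
            (f.continuous.comp (cont_x.comp continuous_fst))
        · exact ht
        · exact continuous_const
        · intro p hp
          rw [hp, eE_of_gt _ _ _ _ _ (by norm_num) (by norm_num)]
          congr 1
          norm_num
      · exact ht
      · exact continuous_const
      · intro p hp
        rw [hp, if_pos (by norm_num : (1/3:ℝ) ≤ 2/3),
          eE_of_le _ _ _ _ _ (by norm_num : (3*(1/3:ℝ) - 1) ≤ 1/3)]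
        congr 1
        norm_num)
    (fun z => by
      show (if (((0:unitInterval):ℝ)) ≤ 1/3 then ME M (3*(((0:unitInterval)):ℝ)) y₀
        else if (((0:unitInterval):ℝ)) ≤ 2/3 then eE f y₀ m M z (3*(((0:unitInterval)):ℝ) - 1)
        else ME M (3 - 3*(((0:unitInterval)):ℝ)) (f z.1.1)) = m y₀
      simp only [Set.Icc.coe_zero]
      rw [if_pos (by norm_num : (0:ℝ) ≤ 1/3), show (3*(0:ℝ)) = 0 by norm_num, ME_zero])
    (fun z => by
      show (if (((1:unitInterval):ℝ)) ≤ 1/3 then ME M (3*(((1:unitInterval)):ℝ)) y₀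
        else if (((1:unitInterval):ℝ)) ≤ 2/3 then eE f y₀ m M z (3*(((1:unitInterval)):ℝ) - 1)
        else ME M (3 - 3*(((1:unitInterval)):ℝ)) (f z.1.1)) = (m.comp f) z.1.1
      simp only [Set.Icc.coe_one]
      rw [if_neg (by norm_num : ¬ (1:ℝ) ≤ 1/3), if_neg (by norm_num : ¬ (1:ℝ) ≤ 2/3)]
      rw [show (3 - 3*(1:ℝ)) = 0 by norm_num, ME_zero]
      rfl)

/-- The identity with its path compressed into the middle ninth. -/
noncomputable def Apad : C(HoFib (m.comp f) (m y₀), HoFib (m.comp f) (m y₀)) :=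
  mkMap (m.comp f) (m y₀) (fun z => z.1.1) cont_x
    (fun p => p.1.1.2 (pI (9*(p.2:ℝ) - 4)))
    (cont_pathEval continuous_fst
      ((continuous_const.mul (continuous_subtype_val.comp continuous_snd)).sub
        continuous_const))
    (fun z => by
      show z.1.2 (pI (9*(((0:unitInterval)):ℝ) - 4)) = m y₀
      rw [show (9*(((0:unitInterval)):ℝ) - 4) = -4 by rw [Set.Icc.coe_zero]; norm_num]
      rw [pI_of_nonpos (by norm_num), z.2.1])
    (fun z => by
      show z.1.2 (pI (9*(((1:unitInterval)):ℝ) - 4)) = (m.comp f) z.1.1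
      rw [show (9*(((1:unitInterval)):ℝ) - 4) = 5 by rw [Set.Icc.coe_one]; norm_num]
      rw [pI_of_one_le (by norm_num), z.2.2])

lemma part_ii : ((Amap f y₀ m).comp (Emap f y₀ m M)).Homotopic
    (ContinuousMap.id (HoFib (m.comp f) (m y₀))) := by
  have hs : Continuous fun p : (unitInterval × HoFib (m.comp f) (m y₀)) × unitInterval =>
      ((p.1.1 : ℝ)) :=
    continuous_subtype_val.comp (continuous_fst.comp continuous_fst)
  have ht : Continuous fun p : (unitInterval × HoFib (m.comp f) (m y₀)) × unitInterval =>
      ((p.2 : ℝ)) :=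
    continuous_subtype_val.comp continuous_snd
  have hz : Continuous fun p : (unitInterval × HoFib (m.comp f) (m y₀)) × unitInterval =>
      p.1.2 :=
    continuous_snd.comp continuous_fst
  -- Step 0 : A ∘ E ≃ Wpad (straight-line reparametrization)
  have step0 : ((Amap f y₀ m).comp (Emap f y₀ m M)).Homotopic (Wpad f y₀ m M) := by
    refine reparam_homotopic _ _ (fun z => z.1.1) cont_x
      (fun p => m (eE f y₀ m M p.1 ((p.2 : unitInterval) : ℝ)))
      (m.continuous.comp ((continuous_eE f y₀ m M).comp (continuous_fst.prodMk
        (continuous_subtype_val.comp continuous_snd))))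
      (fun z => by
        show m (eE f y₀ m M z (((0:unitInterval)):ℝ)) = m y₀
        rw [Set.Icc.coe_zero, eE_zero])
      (fun z => by
        show m (eE f y₀ m M z (((1:unitInterval)):ℝ)) = (m.comp f) z.1.1
        rw [Set.Icc.coe_one, eE_one]; rfl)
      (fun r => r) (fun r => 3*r - 1)
      continuous_id ((continuous_const.mul continuous_id).sub continuous_const)
      le_rfl (by norm_num) le_rfl (by norm_num)
      (fun z => rfl)
      (fun z t => by
        show m (eE f y₀ m M z (t:ℝ)) = m (eE f y₀ m M z ((pI ((t:ℝ)) : unitInterval) : ℝ))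
        rw [pI_coe])
      (fun z => rfl)
      (fun z t => rfl)
  -- Step D : Wpad ≃ Z1map
  have stepD : (Wpad f y₀ m M).Homotopic (Z1map f y₀ m M) := by
    refine homotopic_of _ _ (fun z => z.1.1) cont_x
      (fun p => if ((p.2:ℝ)) ≤ 1/3 then ME M (3*(p.2:ℝ)*(p.1.1:ℝ)) y₀
        else if ((p.2:ℝ)) ≤ 2/3 then ME M ((p.1.1:ℝ)) (eE f y₀ m M p.1.2 (3*(p.2:ℝ) - 1))
        else ME M ((3 - 3*(p.2:ℝ))*(p.1.1:ℝ)) (f p.1.2.1.1))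
      ?_ ?_ ?_ ?_ ?_ ?_ ?_
    · apply Continuous.if_le
      · exact continuous_ME M ((continuous_const.mul ht).mul hs) continuous_const
      · apply Continuous.if_le
        · exact continuous_ME M hs ((continuous_eE f y₀ m M).comp (hz.prodMk
            ((continuous_const.mul ht).sub continuous_const)))
        · exact continuous_ME M ((continuous_const.sub (continuous_const.mul ht)).mul hs)
            (f.continuous.comp (cont_x.comp hz))
        · exact ht
        · exact continuous_const
        · intro p hp
          rw [hp, eE_of_gt _ _ _ _ _ (by norm_num) (by norm_num)]
          rw [show (3*(3*(2/3:ℝ) - 1) - 2) = 1 by norm_num, ME_one]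
          congr 1
          norm_num
      · exact ht
      · exact continuous_const
      · intro p hp
        rw [hp, if_pos (by norm_num : (1/3:ℝ) ≤ 2/3),
          eE_of_le _ _ _ _ _ (by norm_num : (3*(1/3:ℝ) - 1) ≤ 1/3)]
        rw [show (1 - 3*(3*(1/3:ℝ) - 1)) = 1 by norm_num, ME_one]
        congr 1
        norm_num
    · intro s z
      simp only [Set.Icc.coe_zero]
      rw [if_pos (by norm_num : (0:ℝ) ≤ 1/3)]
      rw [show (3*(0:ℝ)*(s:ℝ)) = 0 by ring, ME_zero]
    · intro s z
      simp only [Set.Icc.coe_one]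
      rw [if_neg (by norm_num : ¬ (1:ℝ) ≤ 1/3), if_neg (by norm_num : ¬ (1:ℝ) ≤ 2/3)]
      rw [show ((3 - 3*(1:ℝ))*(s:ℝ)) = 0 by ring, ME_zero]
      rfl
    · intro z; rfl
    · intro z t
      show m (eE f y₀ m M z ((pI (3*(t:ℝ) - 1) : unitInterval) : ℝ)) = _
      simp only [Set.Icc.coe_zero]
      rcases le_or_gt ((t:ℝ)) (1/3) with h1 | h1
      · rw [if_pos h1]
        rw [pI_of_nonpos (by linarith), Set.Icc.coe_zero, eE_zero]
        rw [show (3*(t:ℝ)*(0:ℝ)) = 0 by ring, ME_zero]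
      · rcases le_or_gt ((t:ℝ)) (2/3) with h2 | h2
        · rw [if_neg (not_le.mpr h1), if_pos h2]
          rw [coe_pI_of_mem (by linarith) (by linarith), ME_zero]
        · rw [if_neg (not_le.mpr h1), if_neg (not_le.mpr h2)]
          rw [pI_of_one_le (by linarith), Set.Icc.coe_one, eE_one]
          rw [show ((3 - 3*(t:ℝ))*(0:ℝ)) = 0 by ring, ME_zero]
    · intro z; rfl
    · intro z t
      show (if ((t:ℝ)) ≤ 1/3 then ME M (3*(t:ℝ)) y₀
        else if ((t:ℝ)) ≤ 2/3 then eE f y₀ m M z (3*(t:ℝ) - 1)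
        else ME M (3 - 3*(t:ℝ)) (f z.1.1)) = _
      simp only [Set.Icc.coe_one]
      rcases le_or_gt ((t:ℝ)) (1/3) with h1 | h1
      · rw [if_pos h1, if_pos h1]
        congr 1
        ring
      · rcases le_or_gt ((t:ℝ)) (2/3) with h2 | h2
        · rw [if_neg (not_le.mpr h1), if_pos h2, if_neg (not_le.mpr h1), if_pos h2, ME_one]
        · rw [if_neg (not_le.mpr h1), if_neg (not_le.mpr h2),
            if_neg (not_le.mpr h1), if_neg (not_le.mpr h2)]
          congr 1
          ring
  -- Step C : Z1map ≃ Apad (cancellation of the conjugating paths)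
  have stepC : (Z1map f y₀ m M).Homotopic (Apad f y₀ m) := by
    refine homotopic_of _ _ (fun z => z.1.1) cont_x
      (fun p => if ((p.2:ℝ)) ≤ 1/3 then ME M (3*(p.2:ℝ)*(1-(p.1.1:ℝ))) y₀
        else if ((p.2:ℝ)) ≤ 4/9 then ME M ((4 - 9*(p.2:ℝ))*(1-(p.1.1:ℝ))) y₀
        else if ((p.2:ℝ)) ≤ 5/9 then p.1.2.1.2 (pI (9*(p.2:ℝ) - 4))
        else if ((p.2:ℝ)) ≤ 2/3 then ME M ((9*(p.2:ℝ) - 5)*(1-(p.1.1:ℝ))) (f p.1.2.1.1)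
        else ME M ((3 - 3*(p.2:ℝ))*(1-(p.1.1:ℝ))) (f p.1.2.1.1))
      ?_ ?_ ?_ ?_ ?_ ?_ ?_
    · apply Continuous.if_le
      · exact continuous_ME M ((continuous_const.mul ht).mul (continuous_const.sub hs))
          continuous_const
      · apply Continuous.if_le
        · exact continuous_ME M
            (((continuous_const.sub (continuous_const.mul ht))).mul (continuous_const.sub hs))
            continuous_const
        · apply Continuous.if_le
          · exact cont_pathEval hz ((continuous_const.mul ht).sub continuous_const)
          · apply Continuous.if_le
            · exact continuous_ME M
                (((continuous_const.mul ht).sub continuous_const).mul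
                  (continuous_const.sub hs))
                (f.continuous.comp (cont_x.comp hz))
            · exact continuous_ME M
                ((continuous_const.sub (continuous_const.mul ht)).mul
                  (continuous_const.sub hs))
                (f.continuous.comp (cont_x.comp hz))
            · exact ht
            · exact continuous_const
            · intro p hp
              rw [hp]
              congr 1
              norm_num
          · exact ht
          · exact continuous_const
          · intro p hp
            rw [hp, if_pos (by norm_num : (5/9:ℝ) ≤ 2/3)]
            rw [show (9*(5/9:ℝ) - 4) = 1 by norm_num, pI_one, p.1.2.2.2]
            rw [show ((9*(5/9:ℝ) - 5)*(1-(p.1.1:ℝ))) = 0 by norm_num, ME_zero]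
            rfl
        · exact ht
        · exact continuous_const
        · intro p hp
          rw [hp, if_pos (by norm_num : (4/9:ℝ) ≤ 5/9)]
          rw [show (9*(4/9:ℝ) - 4) = 0 by norm_num, pI_zero, p.1.2.2.1]
          rw [show ((4 - 9*(4/9:ℝ))*(1-(p.1.1:ℝ))) = 0 by norm_num, ME_zero]
      · exact ht
      · exact continuous_const
      · intro p hp
        rw [hp, if_pos (by norm_num : (1/3:ℝ) ≤ 4/9)]
        congr 1
        norm_num
    · intro s z
      simp only [Set.Icc.coe_zero]
      rw [if_pos (by norm_num : (0:ℝ) ≤ 1/3)]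
      rw [show (3*(0:ℝ)*(1-(s:ℝ))) = 0 by ring, ME_zero]
    · intro s z
      simp only [Set.Icc.coe_one]
      rw [if_neg (by norm_num : ¬ (1:ℝ) ≤ 1/3), if_neg (by norm_num : ¬ (1:ℝ) ≤ 4/9),
        if_neg (by norm_num : ¬ (1:ℝ) ≤ 5/9), if_neg (by norm_num : ¬ (1:ℝ) ≤ 2/3)]
      rw [show ((3 - 3*(1:ℝ))*(1-(s:ℝ))) = 0 by ring, ME_zero]
      rfl
    · intro z; rfl
    · intro z t
      show (if ((t:ℝ)) ≤ 1/3 then ME M (3*(t:ℝ)) y₀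
        else if ((t:ℝ)) ≤ 2/3 then eE f y₀ m M z (3*(t:ℝ) - 1)
        else ME M (3 - 3*(t:ℝ)) (f z.1.1)) = _
      simp only [Set.Icc.coe_zero]
      rcases le_or_gt ((t:ℝ)) (1/3) with h1 | h1
      · rw [if_pos h1, if_pos h1]
        congr 1
        ring
      · rcases le_or_gt ((t:ℝ)) (4/9) with h2 | h2
        · rw [if_neg (not_le.mpr h1), if_pos (by linarith : (t:ℝ) ≤ 2/3),
            eE_of_le _ _ _ _ _ (by linarith : (3*(t:ℝ) - 1) ≤ 1/3),
            if_neg (not_le.mpr h1), if_pos h2]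
          congr 1
          ring
        · rcases le_or_gt ((t:ℝ)) (5/9) with h3 | h3
          · rw [if_neg (not_le.mpr h1), if_pos (by linarith : (t:ℝ) ≤ 2/3),
              eE_of_mid _ _ _ _ _ (by simp only [not_le]; linarith) (by linarith),
              if_neg (not_le.mpr h1), if_neg (not_le.mpr h2), if_pos h3]
            congr 2
            ring
          · rcases le_or_gt ((t:ℝ)) (2/3) with h4 | h4
            · rw [if_neg (not_le.mpr h1), if_pos h4,
                eE_of_gt _ _ _ _ _ (by simp only [not_le]; linarith)
                  (by simp only [not_le]; linarith),
                if_neg (not_le.mpr h1), if_neg (not_le.mpr h2), if_neg (not_le.mpr h3),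
                if_pos h4]
              congr 1
              ring
            · rw [if_neg (not_le.mpr h1), if_neg (not_le.mpr h4),
                if_neg (not_le.mpr h1), if_neg (not_le.mpr h2), if_neg (not_le.mpr h3),
                if_neg (not_le.mpr h4)]
              congr 1
              ring
    · intro z; rfl
    · intro z t
      show z.1.2 (pI (9*(t:ℝ) - 4)) = _
      simp only [Set.Icc.coe_one]
      rcases le_or_gt ((t:ℝ)) (1/3) with h1 | h1
      · rw [if_pos h1, pI_of_nonpos (by linarith), z.2.1]
        rw [show (3*(t:ℝ)*(1-(1:ℝ))) = 0 by ring, ME_zero]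
      · rcases le_or_gt ((t:ℝ)) (4/9) with h2 | h2
        · rw [if_neg (not_le.mpr h1), if_pos h2, pI_of_nonpos (by linarith), z.2.1]
          rw [show ((4 - 9*(t:ℝ))*(1-(1:ℝ))) = 0 by ring, ME_zero]
        · rcases le_or_gt ((t:ℝ)) (5/9) with h3 | h3
          · rw [if_neg (not_le.mpr h1), if_neg (not_le.mpr h2), if_pos h3]
          · rcases le_or_gt ((t:ℝ)) (2/3) with h4 | h4
            · rw [if_neg (not_le.mpr h1), if_neg (not_le.mpr h2), if_neg (not_le.mpr h3),
                if_pos h4, pI_of_one_le (by linarith), z.2.2]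
              rw [show ((9*(t:ℝ) - 5)*(1-(1:ℝ))) = 0 by ring, ME_zero]
              rfl
            · rw [if_neg (not_le.mpr h1), if_neg (not_le.mpr h2), if_neg (not_le.mpr h3),
                if_neg (not_le.mpr h4), pI_of_one_le (by linarith), z.2.2]
              rw [show ((3 - 3*(t:ℝ))*(1-(1:ℝ))) = 0 by ring, ME_zero]
              rfl
  -- Step 4 : Apad ≃ id
  have step4 : (Apad f y₀ m).Homotopic (ContinuousMap.id (HoFib (m.comp f) (m y₀))) := by
    refine reparam_homotopic _ _ (fun z => z.1.1) cont_x
      (fun p => p.1.1.2 p.2)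
      (ContinuousEval.continuous_eval.comp ((cont_path.comp continuous_fst).prodMk
        continuous_snd))
      (fun z => z.2.1) (fun z => z.2.2)
      (fun r => 9*r - 4) (fun r => r)
      ((continuous_const.mul continuous_id).sub continuous_const) continuous_id
      (by norm_num) le_rfl (by norm_num) le_rfl
      (fun z => rfl) (fun z t => rfl) (fun z => rfl) ?_
    intro z t
    show z.1.2 t = z.1.2 (pI (t:ℝ))
    rw [pI_coe]
  exact step0.trans (stepD.trans (stepC.trans step4))

/-- The induced map on homotopy fibers of a map homotopic to the identity
is a homotopy equivalence. -/
lemma Amap_isHomotopyEquiv (h : m.Homotopic (ContinuousMap.id Y)) :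
    IsHomotopyEquiv (Amap f y₀ m) := by
  obtain ⟨M0⟩ := h
  exact ⟨Emap f y₀ m M0, part_i f y₀ m M0, part_ii f y₀ m M0⟩

end Htpy2

section Formal

open ContinuousMap

variable {W₁ W₂ W₃ W₄ : Type} [TopologicalSpace W₁] [TopologicalSpace W₂]
  [TopologicalSpace W₃] [TopologicalSpace W₄]

lemma IsHomotopyEquiv.comp' {φ : C(W₁, W₂)} {ψ : C(W₂, W₃)}
    (hφ : IsHomotopyEquiv φ) (hψ : IsHomotopyEquiv ψ) : IsHomotopyEquiv (ψ.comp φ) := by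
  obtain ⟨u, hu1, hu2⟩ := hφ
  obtain ⟨v, hv1, hv2⟩ := hψ
  refine ⟨u.comp v, ?_, ?_⟩
  · have h1 : ((v.comp ψ).comp φ).Homotopic ((ContinuousMap.id W₂).comp φ) :=
      hv1.comp (ContinuousMap.Homotopic.refl φ)
    have h2 : (u.comp ((v.comp ψ).comp φ)).Homotopic
        (u.comp ((ContinuousMap.id W₂).comp φ)) := (ContinuousMap.Homotopic.refl u).comp h1
    have h3 : (u.comp ((ContinuousMap.id W₂).comp φ)).Homotopic (ContinuousMap.id W₁) := by
      rw [ContinuousMap.id_comp]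
      exact hu1
    exact h2.trans h3
  · have h1 : ((φ.comp u).comp v).Homotopic ((ContinuousMap.id W₂).comp v) :=
      hu2.comp (ContinuousMap.Homotopic.refl v)
    have h2 : (ψ.comp ((φ.comp u).comp v)).Homotopic
        (ψ.comp ((ContinuousMap.id W₂).comp v)) := (ContinuousMap.Homotopic.refl ψ).comp h1
    have h3 : (ψ.comp ((ContinuousMap.id W₂).comp v)).Homotopic (ContinuousMap.id W₃) := by
      rw [ContinuousMap.id_comp]
      exact hv2
    exact h2.trans h3

lemma two_of_six {A : C(W₁, W₂)} {B : C(W₂, W₃)} {C : C(W₃, W₄)}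
    (hBA : IsHomotopyEquiv (B.comp A)) (hCB : IsHomotopyEquiv (C.comp B)) :
    IsHomotopyEquiv A := by
  obtain ⟨u, hu1, hu2⟩ := hBA
  obtain ⟨v, hv1, hv2⟩ := hCB
  refine ⟨u.comp B, ?_, ?_⟩
  · exact hu1
  · -- A ∘ (u ∘ B) ≃ id
    have s1 : (A.comp (u.comp B)).Homotopic
        ((v.comp (C.comp B)).comp (A.comp (u.comp B))) := by
      have := hv1.symm.comp (ContinuousMap.Homotopic.refl (A.comp (u.comp B)))
      rwa [ContinuousMap.id_comp] at this
    have s2 : ((v.comp C).comp (((B.comp A).comp u).comp B)).Homotopic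
        ((v.comp C).comp ((ContinuousMap.id W₃).comp B)) :=
      (ContinuousMap.Homotopic.refl (v.comp C)).comp
        (hu2.comp (ContinuousMap.Homotopic.refl B))
    have s3 : ((v.comp C).comp ((ContinuousMap.id W₃).comp B)).Homotopic
        (ContinuousMap.id W₂) := by
      rw [ContinuousMap.id_comp]
      exact hv1
    exact s1.trans (s2.trans s3)

end Formal

section Main

open ContinuousMap

variable {X Y Y' : Type} [TopologicalSpace X] [TopologicalSpace Y] [TopologicalSpace Y']

/-- A homotopy equivalence of bases induces a homotopy equivalence of homotopy fibers. -/
lemma HoFib.map_isHomotopyEquiv (f : C(X, Y)) (y₀ : Y) (h : C(Y, Y'))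
    (hh : IsHomotopyEquiv h) :
    IsHomotopyEquiv (HoFib.map (ContinuousMap.id X) h (fun _ => rfl) rfl :
      C(HoFib f y₀, HoFib (h.comp f) (h y₀))) := by
  obtain ⟨g, hgh, hhg⟩ := hh
  have hBA : IsHomotopyEquiv
      ((HoFib.map (ContinuousMap.id X) g (fun _ => rfl) rfl :
        C(HoFib (h.comp f) (h y₀), HoFib (g.comp (h.comp f)) (g (h y₀)))).comp
       (HoFib.map (ContinuousMap.id X) h (fun _ => rfl) rfl :
        C(HoFib f y₀, HoFib (h.comp f) (h y₀)))) := by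
    have heq : ((HoFib.map (ContinuousMap.id X) g (fun _ => rfl) rfl :
        C(HoFib (h.comp f) (h y₀), HoFib (g.comp (h.comp f)) (g (h y₀)))).comp
       (HoFib.map (ContinuousMap.id X) h (fun _ => rfl) rfl :
        C(HoFib f y₀, HoFib (h.comp f) (h y₀))))
        = Amap f y₀ (g.comp h) := rfl
    rw [heq]
    exact Amap_isHomotopyEquiv f y₀ (g.comp h) hgh
  have hCB : IsHomotopyEquiv
      ((HoFib.map (ContinuousMap.id X) h (fun _ => rfl) rfl :
        C(HoFib (g.comp (h.comp f)) (g (h y₀)),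
          HoFib (h.comp (g.comp (h.comp f))) (h (g (h y₀))))).comp
       (HoFib.map (ContinuousMap.id X) g (fun _ => rfl) rfl :
        C(HoFib (h.comp f) (h y₀), HoFib (g.comp (h.comp f)) (g (h y₀))))) := by
    have heq : ((HoFib.map (ContinuousMap.id X) h (fun _ => rfl) rfl :
        C(HoFib (g.comp (h.comp f)) (g (h y₀)),
          HoFib (h.comp (g.comp (h.comp f))) (h (g (h y₀))))).comp
       (HoFib.map (ContinuousMap.id X) g (fun _ => rfl) rfl :
        C(HoFib (h.comp f) (h y₀), HoFib (g.comp (h.comp f)) (g (h y₀)))))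
        = Amap (h.comp f) (h y₀) (h.comp g) := rfl
    rw [heq]
    exact Amap_isHomotopyEquiv (h.comp f) (h y₀) (h.comp g) hhg
  exact two_of_six hBA hCB

end Main

/-- `KqB^b𝒩 → K[qB𝒩 →⊥ qC𝒩]` is a homotopy equivalence.
Let `𝒩` be an exact category, `bB𝒩 ⊇ qB𝒩` the weak equivalences `f` of `B𝒩` with `⊥f` a
quasi-isomorphism, and `B^b𝒩` the corresponding subcategory of `b`-acyclic binary complexes.
Here `KBb`, `KB`, `KbB`, `KC` stand for the K-theory spaces `KqB^b𝒩`, `KqB𝒩`, `KbB𝒩`,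
`KqC𝒩`; `ι : KqB^b𝒩 → KqB𝒩` and `p : KqB𝒩 → KbB𝒩` form Waldhausen's fibration sequence
`KqB^b𝒩 → KqB𝒩 → KbB𝒩` (hypothesis `hWald`); `botB : KbB𝒩 → KqC𝒩` is the homotopy
equivalence of [Gra12, Theorem 4.8] (hypothesis `hbotEquiv`) and `botQ = ⊥ : KqB𝒩 → KqC𝒩`
is its composite with `p` (hypothesis `hcompat`), whose homotopy fiber is
`K[qB𝒩 →⊥ qC𝒩] = HoFib botQ c₀`.  Then the map `KqB^b𝒩 → K[qB𝒩 →⊥ qC𝒩]` induced by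
the identity on `KqB𝒩` (the comparison of the two fiber sequences) is a homotopy
equivalence. -/
theorem KqBb_to_relative_equiv
    (KBb KB KbB KC : Type)
    [TopologicalSpace KBb] [TopologicalSpace KB] [TopologicalSpace KbB] [TopologicalSpace KC]
    (ι : C(KBb, KB)) (p : C(KB, KbB)) (botB : C(KbB, KC)) (botQ : C(KB, KC))
    (kb₀ : KbB) (c₀ : KC)
    (hnull : ∀ x, p (ι x) = kb₀)
    (hcompat : ∀ x, botB (p x) = botQ x)
    (hbase : botB kb₀ = c₀)
    (hWald : IsHoFiberSeq ι p kb₀ hnull)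
    (hbotEquiv : IsHomotopyEquiv botB) :
    IsHomotopyEquiv
      ((HoFib.map (ContinuousMap.id KB) botB
          (fun x => (hcompat x).trans (congrArg botQ rfl)) hbase).comp
        (toHoFib ι p kb₀ hnull)) := by
  subst hbase
  obtain rfl : botQ = botB.comp p := ContinuousMap.ext fun x => (hcompat x).symm
  exact IsHomotopyEquiv.comp' hWald (HoFib.map_isHomotopyEquiv p kb₀ botB hbotEquiv)
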